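/- Let R = F_1 × ... × F_n be a finite product of finite fields, and let x = c·e_i be a vertex supported only at coordinate i with c ≠ 0. Then the open neighborhood of x in the Jacobson graph of R is the coset c⁻¹·e_i + S minus possibly x itself, where S is the set of elements vanishing at coordinate i; in particular deg(x) = |R|/|F_i| - 1 if c² = 1 and deg(x) = |R|/|F_i| if c² ≠ 1. -/

import Mathlib

/-- The Jacobson graph of a product of fields: vertices are the nonzero
elements, two distinct vertices are adjacent iff `1 - x*y` is not a unit. -/
def jacGraph {ι : Type*} (F : ι → Type*) [∀ i, Field (F i)] :
    SimpleGraph {x : ∀ i, F i // x ≠ 0} where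
  Adj x y := x ≠ y ∧ ¬ IsUnit (1 - (x : ∀ i, F i) * y)
  symm := by
    constructor
    rintro x y ⟨hxy, hu⟩
    exact ⟨hxy.symm, by rwa [mul_comm]⟩
  loopless := by constructor; rintro x ⟨h, _⟩; exact h rfl

section Aux
variable {n : ℕ} (F : Fin n → Type*) [∀ i, Field (F i)] [∀ i, Fintype (F i)]

lemma pi_isUnit_iff (u : ∀ j, F j) : IsUnit u ↔ ∀ j, u j ≠ 0 := by
  constructor
  · intro h j hj
    have := h.map (Pi.evalMonoidHom F j)
    rw [Pi.evalMonoidHom_apply, hj] at this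
    exact this.ne_zero rfl
  · intro h
    exact IsUnit.of_mul_eq_one (a := u) (fun j => (u j)⁻¹)
      (funext fun j => mul_inv_cancel₀ (h j))

lemma aux_card (i : Fin n) (a : F i) (ha : a ≠ 0) :
    Nat.card {y : {x : ∀ j, F j // x ≠ 0} // (y : ∀ j, F j) i = a} =
      Fintype.card (∀ j, F j) / Fintype.card (F i) := by
  classical
  have e1 : {y : {x : ∀ j, F j // x ≠ 0} // (y : ∀ j, F j) i = a} ≃
      {f : ∀ j, F j // f i = a} :=
    { toFun := fun y => ⟨y.1.1, y.2⟩
      invFun := fun f => ⟨⟨f.1, fun h => ha (by rw [← f.2, h]; rfl)⟩, f.2⟩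
      left_inv := fun y => rfl
      right_inv := fun f => rfl }
  have e2 : {f : ∀ j, F j // f i = a} ≃
      {p : F i × (∀ j : {j // j ≠ i}, F j) // p.1 = a} :=
    (Equiv.piSplitAt i F).subtypeEquiv (fun f => by simp [Equiv.piSplitAt])
  have e3 : {p : F i × (∀ j : {j // j ≠ i}, F j) // p.1 = a} ≃
      (∀ j : {j // j ≠ i}, F j) :=
    { toFun := fun p => p.1.2
      invFun := fun b => ⟨(a, b), rfl⟩
      left_inv := by rintro ⟨⟨u, v⟩, rfl⟩; rfl
      right_inv := fun b => rfl }
  rw [Nat.card_congr ((e1.trans e2).trans e3), Nat.card_eq_fintype_card]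
  have htot : Fintype.card (∀ j, F j) =
      Fintype.card (F i) * Fintype.card (∀ j : {j // j ≠ i}, F j) := by
    rw [← Fintype.card_prod]
    exact Fintype.card_congr (Equiv.piSplitAt i F)
  rw [htot, Nat.mul_div_cancel_left _ Fintype.card_pos]

end Aux

theorem jacGraph_neighborSet_single
    {n : ℕ} (F : Fin n → Type*) [∀ i, Field (F i)] [∀ i, Fintype (F i)]
    (i : Fin n) (c : F i) (hc : c ≠ 0)
    (x : {x : ∀ j, F j // x ≠ 0}) (hx : (x : ∀ j, F j) = Pi.single i c) :
    (jacGraph F).neighborSet x =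
        {y : {x : ∀ j, F j // x ≠ 0} | (y : ∀ j, F j) i = c⁻¹} \ {x} ∧
      (c ^ 2 = 1 →
        ((jacGraph F).neighborSet x).ncard =
          Fintype.card (∀ j, F j) / Fintype.card (F i) - 1) ∧
      (c ^ 2 ≠ 1 →
        ((jacGraph F).neighborSet x).ncard =
          Fintype.card (∀ j, F j) / Fintype.card (F i)) := by
  classical
  have hcinv : c⁻¹ ≠ 0 := inv_ne_zero hc
  set S : Set {x : ∀ j, F j // x ≠ 0} :=
    {y : {x : ∀ j, F j // x ≠ 0} | (y : ∀ j, F j) i = c⁻¹} with hS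
  have hadj : ∀ y : {x : ∀ j, F j // x ≠ 0},
      (jacGraph F).Adj x y ↔ x ≠ y ∧ (y : ∀ j, F j) i = c⁻¹ := by
    intro y
    constructor
    · rintro ⟨hne, hu⟩
      refine ⟨hne, ?_⟩
      rw [pi_isUnit_iff] at hu
      push_neg at hu
      obtain ⟨j, hj⟩ := hu
      by_cases hji : j = i
      · subst hji
        simp only [Pi.sub_apply, Pi.one_apply, Pi.mul_apply, hx,
          Pi.single_eq_same, sub_eq_zero] at hj
        have : c⁻¹ * (c * (y : ∀ j, F j) j) = c⁻¹ * 1 := by rw [← hj]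
        rwa [← mul_assoc, inv_mul_cancel₀ hc, one_mul, mul_one] at this
      · exfalso
        simp [hx, Pi.single_eq_of_ne hji] at hj
    · rintro ⟨hne, hy⟩
      refine ⟨hne, fun hu => ?_⟩
      rw [pi_isUnit_iff] at hu
      apply hu i
      simp [hx, Pi.single_eq_same, hy, mul_inv_cancel₀ hc]
  have hset : (jacGraph F).neighborSet x = S \ {x} := by
    ext y
    simp only [SimpleGraph.mem_neighborSet, hadj, hS, Set.mem_diff,
      Set.mem_setOf_eq, Set.mem_singleton_iff]
    tauto
  have hScard : S.ncard = Fintype.card (∀ j, F j) / Fintype.card (F i) := by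
    rw [← Nat.card_coe_set_eq]
    exact aux_card F i c⁻¹ hcinv
  refine ⟨hset, fun h1 => ?_, fun h1 => ?_⟩
  · have hxS : x ∈ S := by
      simp only [hS, Set.mem_setOf_eq, hx, Pi.single_eq_same]
      have h2 : c * c = 1 := by rwa [← sq]
      field_simp
      exact h1
    rw [hset, Set.ncard_diff_singleton_of_mem hxS, hScard]
  · have hxS : x ∉ S := by
      simp only [hS, Set.mem_setOf_eq, hx, Pi.single_eq_same]
      intro h
      apply h1
      have h2 : c * c = c * c⁻¹ := by rw [← h]
      rw [sq, h2, mul_inv_cancel₀ hc]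
    rw [hset, Set.diff_singleton_eq_self hxS, hScard]
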